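/- A finite bipartite graph G, with a fixed bipartition into white and black vertices, is a proper interval bigraph if and only if G admits a bipartite Min-Max ordering. -/

import Mathlib

private lemma icc_ssubset_elim {p q r s : ℝ} (hpq : p ≤ q)
    (h : Set.Icc p q ⊂ Set.Icc r s) : r ≤ p ∧ q ≤ s ∧ (r < p ∨ q < s) := by
  have h1 := (Set.Icc_subset_Icc_iff hpq).mp h.subset
  refine ⟨h1.1, h1.2, ?_⟩
  by_contra hc
  push_neg at hc
  exact h.ne (by rw [le_antisymm h1.1 hc.1, le_antisymm h1.2 hc.2])

private lemma icc_inter_nonempty {p q r s : ℝ} (hpq : p ≤ q) (hrs : r ≤ s) :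
    (Set.Icc p q ∩ Set.Icc r s).Nonempty ↔ p ≤ s ∧ r ≤ q := by
  rw [Set.Icc_inter_Icc, Set.nonempty_Icc]
  constructor
  · intro h
    exact ⟨le_trans (le_trans le_sup_left h) inf_le_right,
           le_trans (le_trans le_sup_right h) inf_le_left⟩
  · rintro ⟨h1, h2⟩
    simp only [sup_le_iff, le_inf_iff]
    exact ⟨⟨hpq, h2⟩, ⟨h1, hrs⟩⟩


private lemma rank_exists {α : Type} [Fintype α] {L : Type} [LinearOrder L]
    (k : α → L) (hk : Function.Injective k) :
    ∃ f : α → ℕ, Function.Injective f ∧ ∀ i j, f i < f j → k i < k j := by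
  classical
  set f : α → ℕ := fun v => (Finset.univ.filter (fun u => k u < k v)).card with hf
  have hmono : ∀ i j, k i < k j → f i < f j := by
    intro i j hij
    apply Finset.card_lt_card
    constructor
    · intro u hu
      simp only [Finset.mem_filter, Finset.mem_univ, true_and] at hu ⊢
      exact lt_trans hu hij
    · intro hsub
      have : i ∈ Finset.univ.filter (fun u => k u < k j) := by simp [hij]
      have := hsub this
      simp at this
  have hinj : Function.Injective f := by
    intro i j hij
    rcases lt_trichotomy (k i) (k j) with h | h | h
    · exact absurd hij (Nat.ne_of_lt (hmono _ _ h))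
    · exact hk h
    · exact absurd hij.symm (Nat.ne_of_lt (hmono _ _ h))
  refine ⟨f, hinj, fun i j hij => ?_⟩
  rcases lt_trichotomy (k i) (k j) with h | h | h
  · exact h
  · exact absurd hij (by rw [hk h]; exact lt_irrefl _)
  · exact absurd (hmono _ _ h) (by omega)



/-- A finite bipartite graph (white part `W`, black part `B`, edge relation
`E`) is a proper interval bigraph iff it admits a bipartite Min-Max ordering. -/
theorem stmt_5 {W B : Type} [Fintype W] [Fintype B] (E : W → B → Prop) :
    (∃ (a b : W → ℝ) (c d : B → ℝ),
       (∀ v, a v ≤ b v) ∧ (∀ w, c w ≤ d w) ∧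
       (∀ v v' : W, ¬ Set.Icc (a v) (b v) ⊂ Set.Icc (a v') (b v')) ∧
       (∀ w w' : B, ¬ Set.Icc (c w) (d w) ⊂ Set.Icc (c w') (d w')) ∧
       (∀ v w, E v w ↔ (Set.Icc (a v) (b v) ∩ Set.Icc (c w) (d w)).Nonempty)) ↔
    (∃ (f : W → ℕ) (g : B → ℕ), Function.Injective f ∧ Function.Injective g ∧
       ∀ i j s r, f i < f j → g s < g r → E i r → E j s → E i s ∧ E j r) := by
  constructor
  · rintro hyp
    classical
    obtain ⟨a, b, c, d, hab, hcd, hW, hB, hE⟩ := hyp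
    obtain ⟨e, he⟩ := exists_injective_nat W
    obtain ⟨e', he'⟩ := exists_injective_nat B
    -- monotonicity from inclusion-freeness
    have hWmono : ∀ i j : W, a i ≤ a j → b i ≤ b j := by
      intro i j hij
      by_contra hbb
      push_neg at hbb
      refine hW j i ⟨Set.Icc_subset_Icc hij (le_of_lt hbb), fun hsub => ?_⟩
      have : b i ∈ Set.Icc (a j) (b j) := hsub ⟨hab i, le_refl _⟩
      exact absurd this.2 (not_le.mpr hbb)
    have hBmono : ∀ s r : B, c s ≤ c r → d s ≤ d r := by
      intro s r hsr
      by_contra hbb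
      push_neg at hbb
      refine hB r s ⟨Set.Icc_subset_Icc hsr (le_of_lt hbb), fun hsub => ?_⟩
      have : d s ∈ Set.Icc (c r) (d r) := hsub ⟨hcd s, le_refl _⟩
      exact absurd this.2 (not_le.mpr hbb)
    have hEiff : ∀ v w, E v w ↔ (a v ≤ d w ∧ c w ≤ b v) := by
      intro v w
      rw [hE v w, icc_inter_nonempty (hab v) (hcd w)]
    obtain ⟨f, hf, hfk⟩ := rank_exists (fun v => toLex (a v, e v))
      (fun u v huv => he (congrArg (fun x => (ofLex x).2) huv))
    obtain ⟨g, hg, hgk⟩ := rank_exists (fun w => toLex (c w, e' w))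
      (fun u v huv => he' (congrArg (fun x => (ofLex x).2) huv))
    have hfa : ∀ i j, f i < f j → a i ≤ a j := by
      intro i j hij
      rcases Prod.Lex.lt_iff.mp (hfk i j hij) with h | ⟨h, _⟩
      · exact le_of_lt h
      · exact le_of_eq h
    have hgc : ∀ s r, g s < g r → c s ≤ c r := by
      intro s r hsr
      rcases Prod.Lex.lt_iff.mp (hgk s r hsr) with h | ⟨h, _⟩
      · exact le_of_lt h
      · exact le_of_eq h
    refine ⟨f, g, hf, hg, fun i j s r hij hsr hir hjs => ?_⟩
    have ha := hfa i j hij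
    have hb := hWmono i j ha
    have hc := hgc s r hsr
    have hd := hBmono s r hc
    rw [hEiff] at hir hjs ⊢
    constructor
    · exact ⟨le_trans ha hjs.1, le_trans hc hir.2⟩
    · rw [hEiff]
      exact ⟨le_trans hjs.1 hd, le_trans hir.2 hb⟩
  · rintro hyp
    classical
    obtain ⟨f, g, hf, hg, hmm⟩ := hyp
    set Fm : ℕ := Finset.univ.sup f with hFm
    set Mm : ℕ := Finset.univ.sup g with hMm
    have hfF : ∀ i, f i ≤ Fm := fun i => Finset.le_sup (Finset.mem_univ i)
    have hgM : ∀ w, g w ≤ Mm := fun w => Finset.le_sup (Finset.mem_univ w)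
    set S : W → Set ℕ := fun i => g '' {w | E i w} with hS
    have hSfin : ∀ i, (S i).Finite := fun i => Set.toFinite _
    set mn : W → ℕ := fun i => sInf (S i) with hmn
    set mx : W → ℕ := fun i => sSup (S i) with hmx
    have hmem_mn : ∀ i, (∃ w, E i w) → ∃ w, E i w ∧ g w = mn i := by
      rintro i ⟨w, hw⟩
      have : mn i ∈ S i := Nat.sInf_mem ⟨g w, ⟨w, hw, rfl⟩⟩
      obtain ⟨w', hw', hgw'⟩ := this
      exact ⟨w', hw', hgw'⟩
    have hmem_mx : ∀ i, (∃ w, E i w) → ∃ w, E i w ∧ g w = mx i := by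
      rintro i ⟨w, hw⟩
      have : mx i ∈ S i := Nat.sSup_mem ⟨g w, ⟨w, hw, rfl⟩⟩ (hSfin i).bddAbove
      obtain ⟨w', hw', hgw'⟩ := this
      exact ⟨w', hw', hgw'⟩
    have hmn_le : ∀ i w, E i w → mn i ≤ g w := fun i w hw => Nat.sInf_le ⟨w, hw, rfl⟩
    have hle_mx : ∀ i w, E i w → g w ≤ mx i :=
      fun i w hw => le_csSup (hSfin i).bddAbove ⟨w, hw, rfl⟩
    have hmx_le_M : ∀ i, (∃ w, E i w) → mx i ≤ Mm := by
      intro i hi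
      obtain ⟨w, _, hgw⟩ := hmem_mx i hi
      rw [← hgw]; exact hgM w
    have hmn_le_mx : ∀ i, (∃ w, E i w) → mn i ≤ mx i := by
      intro i hi
      obtain ⟨w, hw, hgw⟩ := hmem_mn i hi
      rw [← hgw]; exact hle_mx i w hw
    have hmono_mn : ∀ i j, (∃ w, E i w) → (∃ w, E j w) → f i < f j → mn i ≤ mn j := by
      intro i j hi hj hij
      obtain ⟨w2, hw2, hgw2⟩ := hmem_mx i hi
      obtain ⟨wj, hwj, hgwj⟩ := hmem_mn j hj
      rcases le_or_gt (mx i) (mn j) with h | h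
      · exact le_trans (hmn_le_mx i hi) h
      · have hlt : g wj < g w2 := by rw [hgwj, hgw2]; exact h
        have := hmm i j wj w2 hij hlt hw2 hwj
        calc mn i ≤ g wj := hmn_le i wj this.1
          _ = mn j := hgwj
    have hmono_mx : ∀ i j, (∃ w, E i w) → (∃ w, E j w) → f i < f j → mx i ≤ mx j := by
      intro i j hi hj hij
      obtain ⟨w2, hw2, hgw2⟩ := hmem_mx i hi
      obtain ⟨wj, hwj, hgwj⟩ := hmem_mn j hj
      rcases le_or_gt (mx i) (mn j) with h | h
      · calc mx i ≤ mn j := h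
          _ = g wj := hgwj.symm
          _ ≤ mx j := hle_mx j wj hwj
      · have hlt : g wj < g w2 := by rw [hgwj, hgw2]; exact h
        have := hmm i j wj w2 hij hlt hw2 hwj
        calc mx i = g w2 := hgw2.symm
          _ ≤ mx j := hle_mx j w2 this.2
    have hchar : ∀ i w, (∃ k, E k w) → (∃ w', E i w') →
        (E i w ↔ mn i ≤ g w ∧ g w ≤ mx i) := by
      intro i w hw hi
      constructor
      · intro h; exact ⟨hmn_le i w h, hle_mx i w h⟩
      · rintro ⟨h1, h2⟩
        obtain ⟨k, hk⟩ := hw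
        obtain ⟨w1, hw1, hgw1⟩ := hmem_mn i hi
        obtain ⟨w2, hw2, hgw2⟩ := hmem_mx i hi
        rcases lt_trichotomy (f k) (f i) with hc | hc | hc
        · rcases eq_or_lt_of_le (show g w1 ≤ g w by rw [hgw1]; exact h1) with he | he
          · rw [← hg he]; exact hw1
          · exact (hmm k i w1 w hc he hk hw1).2
        · rw [← hf hc]; exact hk
        · rcases eq_or_lt_of_le (show g w ≤ g w2 by rw [hgw2]; exact h2) with he | he
          · rw [hg he]; exact hw2
          · exact (hmm i k w w2 hc he hw2 hk).1
    -- real interval endpoints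
    set θ : W → ℝ := fun i => ((f i : ℝ) + 1) / (2 * (Fm : ℝ) + 4) with hθ
    have hden : (0:ℝ) < 2 * (Fm : ℝ) + 4 := by positivity
    have hθpos : ∀ i, 0 < θ i := by
      intro i
      apply div_pos _ hden
      positivity
    have hθle : ∀ i, θ i ≤ 1/2 := by
      intro i
      rw [hθ]
      rw [div_le_iff₀ hden]
      have : (f i : ℝ) ≤ (Fm : ℝ) := by exact_mod_cast hfF i
      linarith
    have hθmono : ∀ i j, f i < f j → θ i < θ j := by
      intro i j hij
      have h1 : (f i : ℝ) < (f j : ℝ) := by exact_mod_cast hij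
      simp only [hθ]
      gcongr
    set a : W → ℝ := fun i => if ∃ w, E i w then (mn i : ℝ) + θ i else (Mm : ℝ) + 1 + (f i : ℝ) with ha
    set b : W → ℝ := fun i => if ∃ w, E i w then (mx i : ℝ) + θ i else (Mm : ℝ) + 1 + (f i : ℝ) with hb
    set c : B → ℝ := fun w => if ∃ k, E k w then (g w : ℝ) else (Mm : ℝ) + (Fm : ℝ) + 2 + (g w : ℝ) with hc
    set d : B → ℝ := fun w => if ∃ k, E k w then (g w : ℝ) + 1/2 else (Mm : ℝ) + (Fm : ℝ) + 2 + (g w : ℝ) with hd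
    have hab : ∀ v, a v ≤ b v := by
      intro v
      simp only [ha, hb]
      by_cases hv : ∃ w, E v w
      · rw [if_pos hv, if_pos hv]
        have : (mn v : ℝ) ≤ mx v := by exact_mod_cast hmn_le_mx v hv
        linarith
      · rw [if_neg hv, if_neg hv]
    have hcd : ∀ w, c w ≤ d w := by
      intro w
      simp only [hc, hd]
      by_cases hw : ∃ k, E k w
      · rw [if_pos hw, if_pos hw]; linarith
      · rw [if_neg hw, if_neg hw]
    have haa : ∀ i j, (∃ w, E i w) → (∃ w, E j w) → f i < f j → a i < a j := by
      intro i j hi hj hij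
      simp only [ha]; rw [if_pos hi, if_pos hj]
      have h1 : (mn i : ℝ) ≤ mn j := by exact_mod_cast hmono_mn i j hi hj hij
      have h2 := hθmono i j hij
      linarith
    have hbb : ∀ i j, (∃ w, E i w) → (∃ w, E j w) → f i < f j → b i < b j := by
      intro i j hi hj hij
      simp only [hb]; rw [if_pos hi, if_pos hj]
      have h1 : (mx i : ℝ) ≤ mx j := by exact_mod_cast hmono_mx i j hi hj hij
      have h2 := hθmono i j hij
      linarith
    refine ⟨a, b, c, d, hab, hcd, ?_, ?_, ?_⟩
    · intro v v' h
      obtain ⟨h1, h2, h3⟩ := icc_ssubset_elim (hab v) h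
      by_cases hv : ∃ w, E v w <;> by_cases hv' : ∃ w, E v' w
      · rcases lt_trichotomy (f v) (f v') with hlt | heq | hlt
        · exact absurd h1 (not_le.mpr (haa v v' hv hv' hlt))
        · have hvv : v = v' := hf heq
          subst hvv
          rcases h3 with h3 | h3 <;> exact lt_irrefl _ h3
        · exact absurd h2 (not_le.mpr (hbb v' v hv' hv hlt))
      · have he : a v' = b v' := by simp only [ha, hb]; rw [if_neg hv', if_neg hv']
        have := hab v
        rcases h3 with h3 | h3 <;> linarith
      · have hv2 : a v = b v := by simp only [ha, hb]; rw [if_neg hv, if_neg hv]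
        have hv1 : a v = (Mm:ℝ) + 1 + f v := by simp only [ha]; rw [if_neg hv]
        have hb' : b v' ≤ (Mm:ℝ) + 1/2 := by
          simp only [hb]; rw [if_pos hv']
          have h1' : (mx v' : ℝ) ≤ Mm := by exact_mod_cast hmx_le_M v' hv'
          have := hθle v'
          linarith
        have hfv : (0:ℝ) ≤ f v := Nat.cast_nonneg _
        linarith
      · have e1 : a v = (Mm:ℝ) + 1 + f v := by simp only [ha]; rw [if_neg hv]
        have e2 : b v = (Mm:ℝ) + 1 + f v := by simp only [hb]; rw [if_neg hv]
        have e3 : a v' = (Mm:ℝ) + 1 + f v' := by simp only [ha]; rw [if_neg hv']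
        have e4 : b v' = (Mm:ℝ) + 1 + f v' := by simp only [hb]; rw [if_neg hv']
        rcases h3 with h3 | h3 <;> linarith
    · intro w w' h
      obtain ⟨h1, h2, h3⟩ := icc_ssubset_elim (hcd w) h
      by_cases hw : ∃ k, E k w <;> by_cases hw' : ∃ k, E k w'
      · have e1 : c w = (g w : ℝ) := by simp only [hc]; rw [if_pos hw]
        have e2 : d w = (g w : ℝ) + 1/2 := by simp only [hd]; rw [if_pos hw]
        have e3 : c w' = (g w' : ℝ) := by simp only [hc]; rw [if_pos hw']
        have e4 : d w' = (g w' : ℝ) + 1/2 := by simp only [hd]; rw [if_pos hw']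
        rcases h3 with h3 | h3 <;> linarith
      · have e1 : c w' = d w' := by simp only [hc, hd]; rw [if_neg hw', if_neg hw']
        have e2 : d w = c w + 1/2 := by simp only [hc, hd]; rw [if_pos hw, if_pos hw]
        linarith
      · have e2 : c w = (Mm:ℝ) + Fm + 2 + g w := by simp only [hc]; rw [if_neg hw]
        have e1 : c w = d w := by simp only [hc, hd]; rw [if_neg hw, if_neg hw]
        have e3 : d w' = (g w' : ℝ) + 1/2 := by simp only [hd]; rw [if_pos hw']
        have e4 : (g w' : ℝ) ≤ Mm := by exact_mod_cast hgM w'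
        have e5 : (0:ℝ) ≤ g w := Nat.cast_nonneg _
        have e6 : (0:ℝ) ≤ Fm := Nat.cast_nonneg _
        linarith
      · have e1 : c w = (Mm:ℝ) + Fm + 2 + g w := by simp only [hc]; rw [if_neg hw]
        have e2 : d w = (Mm:ℝ) + Fm + 2 + g w := by simp only [hd]; rw [if_neg hw]
        have e3 : c w' = (Mm:ℝ) + Fm + 2 + g w' := by simp only [hc]; rw [if_neg hw']
        have e4 : d w' = (Mm:ℝ) + Fm + 2 + g w' := by simp only [hd]; rw [if_neg hw']
        rcases h3 with h3 | h3 <;> linarith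
    · intro v w
      rw [icc_inter_nonempty (hab v) (hcd w)]
      by_cases hv : ∃ w', E v w' <;> by_cases hw : ∃ k, E k w
      · have e1 : a v = (mn v : ℝ) + θ v := by simp only [ha]; rw [if_pos hv]
        have e2 : b v = (mx v : ℝ) + θ v := by simp only [hb]; rw [if_pos hv]
        have e3 : c w = (g w : ℝ) := by simp only [hc]; rw [if_pos hw]
        have e4 : d w = (g w : ℝ) + 1/2 := by simp only [hd]; rw [if_pos hw]
        rw [hchar v w hw hv, e1, e2, e3, e4]
        have hp := hθpos v
        have hl := hθle v
        constructor
        · rintro ⟨k1, k2⟩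
          have k1' : (mn v : ℝ) ≤ g w := by exact_mod_cast k1
          have k2' : (g w : ℝ) ≤ mx v := by exact_mod_cast k2
          constructor <;> linarith
        · rintro ⟨k1, k2⟩
          constructor
          · have r1 : (mn v : ℝ) < (g w : ℝ) + 1 := by linarith
            have r2 : mn v < g w + 1 := by exact_mod_cast r1
            omega
          · have r1 : (g w : ℝ) < (mx v : ℝ) + 1 := by linarith
            have r2 : g w < mx v + 1 := by exact_mod_cast r1
            omega
      · have e2 : b v ≤ (Mm:ℝ) + 1/2 := by
          simp only [hb]; rw [if_pos hv]
          have h1' : (mx v : ℝ) ≤ Mm := by exact_mod_cast hmx_le_M v hv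
          have := hθle v
          linarith
        have e3 : c w = (Mm:ℝ) + Fm + 2 + g w := by simp only [hc]; rw [if_neg hw]
        constructor
        · intro hE; exact absurd ⟨v, hE⟩ hw
        · rintro ⟨k1, k2⟩
          exfalso
          have n1 : (0:ℝ) ≤ g w := Nat.cast_nonneg _
          have n2 : (0:ℝ) ≤ Fm := Nat.cast_nonneg _
          linarith
      · have e1 : a v = (Mm:ℝ) + 1 + f v := by simp only [ha]; rw [if_neg hv]
        have e4 : d w = (g w : ℝ) + 1/2 := by simp only [hd]; rw [if_pos hw]
        have e5 : (g w : ℝ) ≤ Mm := by exact_mod_cast hgM w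
        constructor
        · intro hE; exact absurd ⟨w, hE⟩ hv
        · rintro ⟨k1, k2⟩
          exfalso
          have n1 : (0:ℝ) ≤ f v := Nat.cast_nonneg _
          linarith
      · have e2 : b v = (Mm:ℝ) + 1 + f v := by simp only [hb]; rw [if_neg hv]
        have e3 : c w = (Mm:ℝ) + Fm + 2 + g w := by simp only [hc]; rw [if_neg hw]
        have e5 : (f v : ℝ) ≤ Fm := by exact_mod_cast hfF v
        constructor
        · intro hE; exact absurd ⟨w, hE⟩ hv
        · rintro ⟨k1, k2⟩
          exfalso
          have n1 : (0:ℝ) ≤ g w := Nat.cast_nonneg _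
          linarith
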